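/- Let n ≤ k ≤ 2n. The map V ↦ σV, where (σV)_i = (V_{−i})^⊥, restricts to a bijection from the set of coisotropic points {V ∈ X(k,2n) : (V_{−i})^⊥ ⊆ V_i for all i ∈ ℤ/2nℤ} onto X(2n−k,2n)^{sp}, whose inverse is again given by σ. -/

import Mathlib

open Matrix

/-- The Gram matrix Ω of the symplectic form: Ω_{s,t} = (−1)^{s+1} if s+t = 2n+1
(1-indexed) and 0 otherwise. -/
noncomputable def Omega (n : ℕ) : Matrix (Fin (2*n)) (Fin (2*n)) ℂ :=
  Matrix.of fun s t =>
    if ((s : ℕ) + 1) + ((t : ℕ) + 1) = 2*n + 1 then (-1 : ℂ)^((s : ℕ) + 1 + 1) else 0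

/-- The symplectic bilinear form ⟨v,w⟩ = vᵀ Ω w on ℂ^{2n}. -/
noncomputable def sform (n : ℕ) (v w : Fin (2*n) → ℂ) : ℂ :=
  v ⬝ᵥ (Omega n).mulVec w

/-- The form, as a linear map in its first argument (second argument fixed). -/
noncomputable def sformL (n : ℕ) (w : Fin (2*n) → ℂ) : (Fin (2*n) → ℂ) →ₗ[ℂ] ℂ where
  toFun v := sform n v w
  map_add' a b := by simp [sform, add_dotProduct]
  map_smul' c a := by simp [sform, smul_dotProduct]

/-- Orthogonal complement W^⊥ = {v | ⟨v,w⟩ = 0 for all w ∈ W} w.r.t. the symplectic form. -/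
noncomputable def sperp (n : ℕ) (W : Submodule ℂ (Fin (2*n) → ℂ)) :
    Submodule ℂ (Fin (2*n) → ℂ) :=
  ⨅ w ∈ W, LinearMap.ker (sformL n w)

theorem mem_sperp {n : ℕ} {W : Submodule ℂ (Fin (2*n) → ℂ)} {v : Fin (2*n) → ℂ} :
    v ∈ sperp n W ↔ ∀ w ∈ W, sform n v w = 0 := by
  simp only [sperp, Submodule.mem_iInf, LinearMap.mem_ker]
  exact Iff.rfl

/-- The matrix of the shift map τ₁ : e_j ↦ e_{j+1} (1 ≤ j ≤ 2n−1), e_{2n} ↦ 0. -/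
noncomputable def tauMat (n : ℕ) : Matrix (Fin (2*n)) (Fin (2*n)) ℂ :=
  Matrix.of fun s t => if (s : ℕ) = (t : ℕ) + 1 then 1 else 0

/-- Membership in X(k,2n): a tuple of k-dimensional subspaces of ℂ^{2n} indexed by
ℤ/2nℤ with τ₁(V_i) ⊆ V_{i+1} for all i. -/
def memX (n k : ℕ) (V : ZMod (2*n) → Submodule ℂ (Fin (2*n) → ℂ)) : Prop :=
  (∀ i, Module.finrank ℂ (V i) = k) ∧
  (∀ i, Submodule.map (tauMat n).mulVecLin (V i) ≤ V (i + 1))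


/-- Membership in X(k,2n)^{sp}: points of X(k,2n) with V_i ⊆ (V_{−i})^⊥ for all i. -/
def memXsp (n k : ℕ) (V : ZMod (2*n) → Submodule ℂ (Fin (2*n) → ℂ)) : Prop :=
  memX n k V ∧ ∀ i, V i ≤ sperp n (V (-i))

/-- The map σ: (σV)_i = (V_{−i})^⊥. -/
noncomputable def sigmaMap (n : ℕ) (V : ZMod (2*n) → Submodule ℂ (Fin (2*n) → ℂ)) :
    ZMod (2*n) → Submodule ℂ (Fin (2*n) → ℂ) :=
  fun i => sperp n (V (-i))

lemma npow_mul_npow {a b : ℕ} (h : (a + b) % 2 = 1) : (-1:ℂ)^a * (-1:ℂ)^b = -1 := by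
  rw [← pow_add]; exact Odd.neg_one_pow (Nat.odd_iff.mpr h)

lemma omega_mul_omega (n : ℕ) : Omega n * Omega n = -1 := by
  ext s t
  have hs : (s:ℕ) < 2*n := s.isLt
  have ht : (t:ℕ) < 2*n := t.isLt
  rw [Matrix.mul_apply]
  rw [Fintype.sum_eq_single (⟨2*n-1-(s:ℕ), by omega⟩ : Fin (2*n)) ?_]
  · simp only [Omega, Matrix.of_apply]
    rw [if_pos (by omega)]
    by_cases hts : t = s
    · subst hts
      rw [if_pos (by omega)]
      have : (-1 : Matrix (Fin (2*n)) (Fin (2*n)) ℂ) t t = -1 := by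
        simp [Matrix.one_apply]
      rw [this]
      exact npow_mul_npow (by omega)
    · rw [if_neg (by
        intro hc
        apply hts
        apply Fin.ext
        omega)]
      have : (-1 : Matrix (Fin (2*n)) (Fin (2*n)) ℂ) s t = 0 := by
        simp [Matrix.one_apply, Ne.symm hts]
      rw [this, mul_zero]
  · intro u hu
    have hu' : (u:ℕ) ≠ 2*n-1-(s:ℕ) := by
      intro h; exact hu (Fin.ext (by simp [h]))
    simp only [Omega, Matrix.of_apply]
    rw [if_neg (by omega), zero_mul]

lemma tau_omega (n : ℕ) : (tauMat n)ᵀ * Omega n = -(Omega n * tauMat n) := by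
  ext s t
  have hs : (s:ℕ) < 2*n := s.isLt
  have ht : (t:ℕ) < 2*n := t.isLt
  rw [Matrix.mul_apply, Matrix.neg_apply, Matrix.mul_apply]
  by_cases hst : (s:ℕ) + (t:ℕ) + 2 = 2*n
  · have hs1 : (s:ℕ)+1 < 2*n := by omega
    have ht1 : (t:ℕ)+1 < 2*n := by omega
    rw [Fintype.sum_eq_single (⟨(s:ℕ)+1, hs1⟩ : Fin (2*n)) ?_,
        Fintype.sum_eq_single (⟨(t:ℕ)+1, ht1⟩ : Fin (2*n)) ?_]
    · simp only [tauMat, Omega, Matrix.of_apply, Matrix.transpose_apply]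
      simp only [if_true]
      rw [if_pos (by omega : (s:ℕ) + 1 + 1 + ((t:ℕ) + 1) = 2 * n + 1),
          if_pos (by omega : (s:ℕ) + 1 + ((t:ℕ) + 1 + 1) = 2 * n + 1), one_mul, mul_one]
      have h1 : (-1:ℂ)^((s:ℕ)+1+1+1) * (-1:ℂ)^((s:ℕ)+1+1) = -1 := npow_mul_npow (by omega)
      have h2 : (-1:ℂ)^((s:ℕ)+1+1) * (-1:ℂ)^((s:ℕ)+1+1) = 1 := by
        rw [← pow_add]; exact Even.neg_one_pow ⟨(s:ℕ)+1+1, rfl⟩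
      calc (-1:ℂ)^((s:ℕ)+1+1+1)
          = (-1:ℂ)^((s:ℕ)+1+1+1) * ((-1:ℂ)^((s:ℕ)+1+1) * (-1:ℂ)^((s:ℕ)+1+1)) := by
            rw [h2, mul_one]
        _ = ((-1:ℂ)^((s:ℕ)+1+1+1) * (-1:ℂ)^((s:ℕ)+1+1)) * (-1:ℂ)^((s:ℕ)+1+1) := by ring
        _ = -(-1:ℂ)^((s:ℕ)+1+1) := by rw [h1]; ring
    · intro u hu
      have hu' : (u:ℕ) ≠ (t:ℕ)+1 := by intro h; exact hu (Fin.ext (by simp [h]))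
      simp only [tauMat, Omega, Matrix.of_apply]
      rw [if_neg hu', mul_zero]
    · intro u hu
      have hu' : (u:ℕ) ≠ (s:ℕ)+1 := by intro h; exact hu (Fin.ext (by simp [h]))
      simp only [tauMat, Omega, Matrix.of_apply, Matrix.transpose_apply]
      rw [if_neg (by omega), zero_mul]
  · rw [Finset.sum_eq_zero, Finset.sum_eq_zero, neg_zero]
    · intro u _
      simp only [tauMat, Omega, Matrix.of_apply]
      by_cases h1 : ((s:ℕ)+1) + ((u:ℕ)+1) = 2*n+1
      · rw [if_pos h1, if_neg (by omega), mul_zero]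
      · rw [if_neg h1, zero_mul]
    · intro u _
      simp only [tauMat, Omega, Matrix.of_apply, Matrix.transpose_apply]
      by_cases h1 : (u:ℕ) = (s:ℕ)+1
      · rw [if_pos h1, if_neg (by omega), one_mul]
      · rw [if_neg h1, zero_mul]

noncomputable def Bform (n : ℕ) : LinearMap.BilinForm ℂ (Fin (2*n) → ℂ) :=
  Matrix.toBilin' (Omega n)ᵀ

lemma Bform_apply (n : ℕ) (v w : Fin (2*n) → ℂ) : Bform n v w = sform n w v := by
  rw [Bform, Matrix.toBilin'_apply', sform, Matrix.dotProduct_mulVec, Matrix.vecMul_transpose]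
  exact dotProduct_comm _ _

lemma sform_skew (n : ℕ) (v w : Fin (2*n) → ℂ) : sform n v w = - sform n w v := by
  have hskew : (Omega n)ᵀ = -(Omega n) := by
    ext s t
    simp only [Matrix.transpose_apply, Omega, Matrix.of_apply, Matrix.neg_apply]
    by_cases h : ((s:ℕ)+1) + ((t:ℕ)+1) = 2*n+1
    · rw [if_pos (by omega), if_pos h]
      have h1 : (-1:ℂ)^((t:ℕ)+1+1) * (-1:ℂ)^((s:ℕ)+1+1) = -1 := npow_mul_npow (by omega)
      have h2 : (-1:ℂ)^((s:ℕ)+1+1) * (-1:ℂ)^((s:ℕ)+1+1) = 1 := by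
        rw [← pow_add]; exact Even.neg_one_pow ⟨(s:ℕ)+1+1, rfl⟩
      calc (-1:ℂ)^((t:ℕ)+1+1)
          = (-1:ℂ)^((t:ℕ)+1+1) * ((-1:ℂ)^((s:ℕ)+1+1) * (-1:ℂ)^((s:ℕ)+1+1)) := by
            rw [h2, mul_one]
        _ = ((-1:ℂ)^((t:ℕ)+1+1) * (-1:ℂ)^((s:ℕ)+1+1)) * (-1:ℂ)^((s:ℕ)+1+1) := by ring
        _ = -(-1:ℂ)^((s:ℕ)+1+1) := by rw [h1]; ring
    · rw [if_neg (by omega), if_neg h, neg_zero]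
  rw [sform, sform, Matrix.dotProduct_mulVec,
    show v ᵥ* Omega n = (Omega n)ᵀ *ᵥ v from (Matrix.mulVec_transpose _ _).symm, hskew,
    Matrix.neg_mulVec, neg_dotProduct]
  exact congrArg Neg.neg (dotProduct_comm _ _)

lemma Bform_refl (n : ℕ) : (Bform n).IsRefl := by
  intro v w h
  rw [Bform_apply] at h ⊢
  rw [sform_skew, h, neg_zero]

lemma Bform_nondeg (n : ℕ) : (Bform n).Nondegenerate := by
  apply Matrix.Nondegenerate.toBilin'
  apply Matrix.nondegenerate_of_det_ne_zero
  rw [Matrix.det_transpose]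
  intro h
  have h2 : (Omega n).det * (Omega n).det = (-1 : Matrix (Fin (2*n)) (Fin (2*n)) ℂ).det := by
    rw [← Matrix.det_mul, omega_mul_omega]
  rw [show (-1 : Matrix (Fin (2*n)) (Fin (2*n)) ℂ) = -(1 : Matrix _ _ ℂ) from rfl,
    Matrix.det_neg, Matrix.det_one, h, mul_zero] at h2
  simp at h2

lemma sperp_eq (n : ℕ) (W : Submodule ℂ (Fin (2*n) → ℂ)) :
    sperp n W = (Bform n).orthogonal W := by
  ext v
  rw [mem_sperp, LinearMap.BilinForm.mem_orthogonal_iff]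
  constructor
  · intro h w hw; exact (Bform_apply n w v).trans (h w hw)
  · intro h w hw; exact (Bform_apply n w v).symm.trans (h w hw)

lemma sperp_sperp (n : ℕ) (W : Submodule ℂ (Fin (2*n) → ℂ)) : sperp n (sperp n W) = W := by
  rw [sperp_eq, sperp_eq]
  exact LinearMap.BilinForm.orthogonal_orthogonal (Bform_nondeg n) (Bform_refl n) W

lemma finrank_sperp (n : ℕ) (W : Submodule ℂ (Fin (2*n) → ℂ)) :
    Module.finrank ℂ (sperp n W) = 2*n - Module.finrank ℂ W := by
  rw [sperp_eq, LinearMap.BilinForm.finrank_orthogonal (Bform_nondeg n)]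
  congr 1
  exact Module.finrank_fin_fun ℂ

lemma sform_tau (n : ℕ) (v w : Fin (2*n) → ℂ) :
    sform n ((tauMat n) *ᵥ v) w = - sform n v ((tauMat n) *ᵥ w) := by
  rw [sform, sform]
  rw [show (tauMat n) *ᵥ v = ((tauMat n)ᵀ)ᵀ *ᵥ v from by rw [Matrix.transpose_transpose],
    Matrix.mulVec_transpose, ← Matrix.dotProduct_mulVec, Matrix.mulVec_mulVec, tau_omega,
    Matrix.neg_mulVec, dotProduct_neg, ← Matrix.mulVec_mulVec]

lemma tau_sperp (n : ℕ) {A B : Submodule ℂ (Fin (2*n) → ℂ)}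
    (h : Submodule.map (tauMat n).mulVecLin B ≤ A) :
    Submodule.map (tauMat n).mulVecLin (sperp n A) ≤ sperp n B := by
  rintro _ ⟨v, hv, rfl⟩
  have hv' : ∀ w ∈ A, sform n v w = 0 := mem_sperp.mp hv
  rw [mem_sperp]
  intro w hw
  rw [Matrix.mulVecLin_apply, sform_tau]
  have : (tauMat n) *ᵥ w ∈ A := h ⟨w, hw, by rw [Matrix.mulVecLin_apply]⟩
  rw [hv' _ this, neg_zero]

/-- for n ≤ k ≤ 2n, σ restricts to a bijection from the set of
coisotropic points of X(k,2n) onto X(2n−k,2n)^{sp}, with inverse again given by σ. -/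
theorem statement17 (n k : ℕ) (hn : 1 ≤ n) (hnk : n ≤ k) (hk : k ≤ 2*n) :
    (∀ V : ZMod (2*n) → Submodule ℂ (Fin (2*n) → ℂ),
        memX n k V → (∀ i, sperp n (V (-i)) ≤ V i) →
          memXsp n (2*n - k) (sigmaMap n V) ∧ sigmaMap n (sigmaMap n V) = V) ∧
    (∀ W : ZMod (2*n) → Submodule ℂ (Fin (2*n) → ℂ),
        memXsp n (2*n - k) W →
          (memX n k (sigmaMap n W) ∧ (∀ i, sperp n ((sigmaMap n W) (-i)) ≤ sigmaMap n W i))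
            ∧ sigmaMap n (sigmaMap n W) = W) := by
  constructor
  · intro V hV hco
    obtain ⟨hdim, htau⟩ := hV
    have hss : sigmaMap n (sigmaMap n V) = V := by
      funext i
      show sperp n (sperp n (V (- -i))) = V i
      rw [neg_neg, sperp_sperp]
    refine ⟨⟨⟨?_, ?_⟩, ?_⟩, hss⟩
    · intro i
      show Module.finrank ℂ (sperp n (V (-i))) = 2*n - k
      rw [finrank_sperp, hdim]
    · intro i
      show Submodule.map _ (sperp n (V (-i))) ≤ sperp n (V (-(i+1)))
      apply tau_sperp
      have h := htau (-(i+1))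
      rwa [show (-(i+1) : ZMod (2*n)) + 1 = -i from by ring] at h
    · intro i
      show sperp n (V (-i)) ≤ sperp n (sperp n (V (- -i)))
      rw [neg_neg, sperp_sperp]
      exact hco i
  · intro W hW
    obtain ⟨⟨hdim, htau⟩, hsp⟩ := hW
    have hss : sigmaMap n (sigmaMap n W) = W := by
      funext i
      show sperp n (sperp n (W (- -i))) = W i
      rw [neg_neg, sperp_sperp]
    refine ⟨⟨⟨?_, ?_⟩, ?_⟩, hss⟩
    · intro i
      show Module.finrank ℂ (sperp n (W (-i))) = k
      rw [finrank_sperp, hdim]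
      omega
    · intro i
      show Submodule.map _ (sperp n (W (-i))) ≤ sperp n (W (-(i+1)))
      apply tau_sperp
      have h := htau (-(i+1))
      rwa [show (-(i+1) : ZMod (2*n)) + 1 = -i from by ring] at h
    · intro i
      show sperp n (sperp n (W (- -i))) ≤ sperp n (W (-i))
      rw [neg_neg, sperp_sperp]
      exact hsp i
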